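/- Let q be a real number with q ≠ 1, let n be a positive integer, and let f : ℝ → ℝ be a function defined on an interval (-ρ, ρ) with ρ > 0 whose n-th derivative at x = 0 exists. Then the value of the n-th iterated q-derivative of f at 0 satisfies (D_q^n f)(0) = (f^(n)(0)/n!) · (q;q)_n/(1-q)^n, where (q;q)_n = ∏_{j=1}^{n} (1 - q^j). -/

import Mathlib

open Filter Finset

/-- The `q`-derivative operator: `D_q f x = (f x - f (q x)) / ((1-q) x)` for `x ≠ 0`,
and `D_q f 0 = f'(0)`. -/
noncomputable def qDeriv (q : ℝ) (f : ℝ → ℝ) : ℝ → ℝ :=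
  fun x => if x = 0 then deriv f 0 else (f x - f (q * x)) / ((1 - q) * x)

/-- The `q`-Pochhammer symbol `(a;q)_n = ∏_{j=0}^{n-1} (1 - a q^j)`. -/
noncomputable def qPoch (a q : ℝ) (n : ℕ) : ℝ := ∏ j ∈ Finset.range n, (1 - a * q ^ j)


theorem peano_taylor : ∀ (m : ℕ), 1 ≤ m → ∀ (f : ℝ → ℝ),
    (∀ k < m - 1, ∀ᶠ x in nhds (0:ℝ), DifferentiableAt ℝ (iteratedDeriv k f) x) →
    DifferentiableAt ℝ (iteratedDeriv (m-1) f) 0 →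
    Tendsto (fun x : ℝ =>
        (f x - ∑ i ∈ range (m+1), iteratedDeriv i f 0 / i.factorial * x ^ i) / x ^ m)
      (nhdsWithin (0:ℝ) {0}ᶜ) (nhds 0) := by
  intro m
  induction m with
  | zero => omega
  | succ m ih =>
    intro _ f h1 h2
    rcases Nat.eq_zero_or_pos m with hm0 | hm1
    · -- base case m+1 = 1
      subst hm0
      simp only [Nat.sub_self, iteratedDeriv_zero] at h2
      have hd := h2.hasDerivAt
      have hslope := hasDerivAt_iff_tendsto_slope.mp hd
      have : Tendsto (fun x : ℝ => slope f 0 x - deriv f 0) (nhdsWithin 0 {0}ᶜ) (nhds 0) := by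
        simpa using hslope.sub_const (deriv f 0)
      refine this.congr' ?_
      filter_upwards [self_mem_nhdsWithin] with x hx
      have hx0 : x ≠ 0 := hx
      simp only [slope_def_field]
      rw [Finset.sum_range_succ, Finset.sum_range_succ, Finset.sum_range_zero]
      simp [iteratedDeriv_zero, iteratedDeriv_one, Nat.factorial]
      field_simp
      ring
    · -- inductive step, m ≥ 1
      have hfd : ∀ᶠ x in nhds (0:ℝ), DifferentiableAt ℝ f x := by
        have := h1 0 (by omega)
        simpa using this
      -- hypotheses for deriv f
      have h1' : ∀ k < m - 1, ∀ᶠ x in nhds (0:ℝ), DifferentiableAt ℝ (iteratedDeriv k (deriv f)) x := by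
        intro k hk
        have := h1 (k+1) (by omega)
        simpa [← iteratedDeriv_succ'] using this
      have h2' : DifferentiableAt ℝ (iteratedDeriv (m-1) (deriv f)) 0 := by
        have hm' : m - 1 + 1 = m := Nat.succ_pred_eq_of_pos hm1
        have : iteratedDeriv (m-1) (deriv f) = iteratedDeriv m f := by
          conv_rhs => rw [← hm']
          rw [iteratedDeriv_succ']
        rw [this]
        simpa using h2
      have IH := ih hm1 (deriv f) h1' h2'
      -- iterated derivs of deriv f
      have hiter : ∀ i : ℕ, iteratedDeriv i (deriv f) 0 = iteratedDeriv (i+1) f 0 := by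
        intro i; rw [← iteratedDeriv_succ']
      -- set Taylor coefficients
      set a : ℕ → ℝ := fun i => iteratedDeriv i f 0 / i.factorial with ha
      -- L'Hôpital
      have key : Tendsto (fun x : ℝ =>
          (deriv f x - ∑ i ∈ range (m+1), iteratedDeriv i (deriv f) 0 / i.factorial * x ^ i)
            / ((m+1 : ℝ) * x ^ m)) (nhdsWithin (0:ℝ) {0}ᶜ) (nhds 0) := by
        have : Tendsto (fun x : ℝ =>
            ((deriv f x - ∑ i ∈ range (m+1), iteratedDeriv i (deriv f) 0 / i.factorial * x ^ i)
              / x ^ m) * ((m+1:ℝ))⁻¹) (nhdsWithin (0:ℝ) {0}ᶜ) (nhds (0 * ((m+1:ℝ))⁻¹)) :=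
          IH.mul_const _
        rw [zero_mul] at this
        refine this.congr ?_
        intro x
        rw [← div_eq_mul_inv, div_div, mul_comm (x ^ m)]
      -- apply L'Hopital to g = f - Taylor poly, G = x^(m+1)
      set T : ℝ → ℝ := fun x => ∑ i ∈ range (m+2), a i * x ^ i with hT
      set g : ℝ → ℝ := fun x => f x - T x with hg
      set g' : ℝ → ℝ := fun x => deriv f x - ∑ i ∈ range (m+2), a i * (i * x ^ (i-1)) with hg'
      have hTd : ∀ x : ℝ, HasDerivAt T (∑ i ∈ range (m+2), a i * (i * x ^ (i-1))) x := by
        intro x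
        exact HasDerivAt.fun_sum fun i _ => (hasDerivAt_pow i x).const_mul (a i)
      have hgd : ∀ᶠ x in nhdsWithin (0:ℝ) {0}ᶜ, HasDerivAt g (g' x) x := by
        refine eventually_nhdsWithin_of_eventually_nhds ?_
        filter_upwards [hfd] with x hx
        exact hx.hasDerivAt.sub (hTd x)
      have hGd : ∀ᶠ x in nhdsWithin (0:ℝ) {0}ᶜ, HasDerivAt (fun x : ℝ => x ^ (m+1))
          (((m:ℝ)+1) * x ^ m) x := by
        filter_upwards with x
        simpa using hasDerivAt_pow (m+1) x
      have hG' : ∀ᶠ x in nhdsWithin (0:ℝ) {0}ᶜ, ((m:ℝ)+1) * x ^ m ≠ 0 := by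
        filter_upwards [self_mem_nhdsWithin] with x hx
        have hx0 : x ≠ 0 := hx
        positivity
      have hga : Tendsto g (nhdsWithin (0:ℝ) {0}ᶜ) (nhds 0) := by
        have hcont : ContinuousAt g 0 := by
          have hf0 : DifferentiableAt ℝ f 0 := hfd.self_of_nhds
          exact (hf0.continuousAt.sub (hTd 0).continuousAt :)
        have hg0 : g 0 = 0 := by
          simp only [hg, hT]
          rw [Finset.sum_eq_single 0]
          · simp [ha, iteratedDeriv_zero]
          · intro i _ hi
            simp [zero_pow hi]
          · simp
        have h3 : Tendsto g (nhdsWithin (0:ℝ) {0}ᶜ) (nhds (g 0)) :=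
          hcont.tendsto.mono_left nhdsWithin_le_nhds
        rwa [hg0] at h3
      have hGa : Tendsto (fun x : ℝ => x ^ (m+1)) (nhdsWithin (0:ℝ) {0}ᶜ) (nhds 0) := by
        have : ContinuousAt (fun x : ℝ => x ^ (m+1)) 0 := by fun_prop
        have h : Tendsto (fun x : ℝ => x ^ (m+1)) (nhdsWithin (0:ℝ) {0}ᶜ) (nhds ((0:ℝ) ^ (m+1))) :=
          this.tendsto.mono_left nhdsWithin_le_nhds
        simpa using h
      have hdiv : Tendsto (fun x : ℝ => g' x / (((m:ℝ)+1) * x ^ m))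
          (nhdsWithin (0:ℝ) {0}ᶜ) (nhds 0) := by
        refine key.congr ?_
        intro x
        congr 1
        simp only [hg']
        congr 1
        rw [Finset.sum_range_succ' (fun i => a i * ((i:ℝ) * x ^ (i-1))) (m+1)]
        simp only [Nat.cast_zero, zero_mul, mul_zero, add_zero, Nat.cast_ofNat]
        refine Finset.sum_congr rfl fun i _ => ?_
        rw [hiter i]
        simp only [ha]
        rw [Nat.factorial_succ]
        push_cast
        have : (i.factorial : ℝ) ≠ 0 := by positivity
        field_simp
      have final := HasDerivAt.lhopital_zero_nhdsNE hgd hGd hG' hga hGa hdiv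
      refine final.congr ?_
      intro x
      simp only [hg, hT, ha]

noncomputable def qc (q : ℝ) : ℕ → ℕ → ℝ
  | 0, 0 => 1
  | 0, _+1 => 0
  | k+1, 0 => qc q k 0 / (1-q)
  | k+1, j+1 => (qc q k (j+1) - q ^ (-(k:ℤ)) * qc q k j) / (1-q)

lemma qc_eq_zero (q : ℝ) : ∀ k j, k < j → qc q k j = 0 := by
  intro k
  induction k with
  | zero => intro j hj; match j, hj with
    | j+1, _ => rfl
  | succ k ih =>
    intro j hj
    match j, hj with
    | j+1, hj =>
      show (qc q k (j+1) - q ^ (-(k:ℤ)) * qc q k j) / (1-q) = 0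
      rw [ih (j+1) (by omega), ih j (by omega)]
      simp

lemma qc_sum_succ (q : ℝ) (k : ℕ) (u : ℕ → ℝ) :
    ∑ j ∈ range (k+2), qc q (k+1) j * u j =
      (∑ j ∈ range (k+1), qc q k j * u j
        - q ^ (-(k:ℤ)) * ∑ j ∈ range (k+1), qc q k j * u (j+1)) / (1-q) := by
  rw [Finset.sum_range_succ' (fun j => qc q (k+1) j * u j) (k+1)]
  have h0 : qc q (k+1) 0 * u 0 = qc q k 0 / (1-q) * u 0 := rfl
  have hs : ∀ j, qc q (k+1) (j+1) * u (j+1)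
      = (qc q k (j+1) - q ^ (-(k:ℤ)) * qc q k j) / (1-q) * u (j+1) := fun j => rfl
  rw [h0]
  rw [Finset.sum_congr rfl (fun j _ => hs j)]
  have hexp : ∑ j ∈ range (k+1), qc q k (j+1) * u (j+1)
      = ∑ j ∈ range (k+1), qc q k j * u j - qc q k 0 * u 0 := by
    have := Finset.sum_range_succ' (fun j => qc q k j * u j) k
    -- ∑_{range (k+1)} = ∑_{range k} (j+1 terms) + j=0 term
    have h2 : ∑ j ∈ range k, qc q k (j+1) * u (j+1)
        = ∑ j ∈ range (k+1), qc q k j * u j - qc q k 0 * u 0 := by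
      rw [this]; ring
    rw [Finset.sum_range_succ, h2, qc_eq_zero q k (k+1) (by omega)]
    ring
  rw [Finset.sum_congr rfl (fun j _ => show
      (qc q k (j+1) - q ^ (-(k:ℤ)) * qc q k j) / (1-q) * u (j+1)
        = qc q k (j+1) / (1-q) * u (j+1) - q ^ (-(k:ℤ)) * qc q k j / (1-q) * u (j+1) by ring)]
  rw [Finset.sum_sub_distrib]
  rw [show ∑ j ∈ range (k+1), q ^ (-(k:ℤ)) * qc q k j / (1-q) * u (j+1)
      = (q ^ (-(k:ℤ)) * ∑ j ∈ range (k+1), qc q k j * u (j+1)) / (1-q) by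
    rw [Finset.mul_sum, Finset.sum_div]
    exact Finset.sum_congr rfl fun j _ => by ring]
  rw [show ∑ j ∈ range (k+1), qc q k (j+1) / (1-q) * u (j+1)
      = (∑ j ∈ range (k+1), qc q k (j+1) * u (j+1)) / (1-q) by
    rw [Finset.sum_div]
    exact Finset.sum_congr rfl fun j _ => by ring]
  rw [hexp]
  ring

lemma qDeriv_iterate_formula (q : ℝ) (hq : q ≠ 1) (hq0 : q ≠ 0) (f : ℝ → ℝ) :
    ∀ (k : ℕ) (x : ℝ), x ≠ 0 →
      ((qDeriv q)^[k] f) x = (∑ j ∈ range (k+1), qc q k j * f (q ^ j * x)) / x ^ k := by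
  intro k
  induction k with
  | zero => intro x hx; simp [qc]
  | succ k ih =>
    intro x hx
    rw [Function.iterate_succ_apply']
    have hqx : q * x ≠ 0 := mul_ne_zero hq0 hx
    rw [show qDeriv q ((qDeriv q)^[k] f) x
        = (((qDeriv q)^[k] f) x - ((qDeriv q)^[k] f) (q * x)) / ((1-q) * x) by
      simp [qDeriv, hx]]
    rw [ih x hx, ih (q*x) hqx]
    rw [qc_sum_succ q k (fun j => f (q ^ j * x))]
    have hrw : ∑ j ∈ range (k+1), qc q k j * f (q ^ j * (q * x))
        = ∑ j ∈ range (k+1), qc q k j * f (q ^ (j+1) * x) := by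
      refine Finset.sum_congr rfl fun j _ => ?_
      ring_nf
    rw [hrw]
    have h1q : (1:ℝ) - q ≠ 0 := sub_ne_zero.mpr (fun h => hq (by linarith))
    have hxk : x ^ k ≠ 0 := pow_ne_zero _ hx
    have hqk : (q:ℝ) ^ k ≠ 0 := pow_ne_zero _ hq0
    have hzpow : q ^ (-(k:ℤ)) = (q ^ k)⁻¹ := by
      rw [zpow_neg, zpow_natCast]
    rw [hzpow]
    field_simp
    ring

lemma qc_monomial (q : ℝ) (hq : q ≠ 1) (hq0 : q ≠ 0) :
    ∀ (k i : ℕ), ∑ j ∈ range (k+1), qc q k j * (q ^ i) ^ j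
      = (∏ l ∈ range k, (1 - q ^ ((i:ℤ) - (l:ℤ)))) / (1-q) ^ k := by
  intro k
  induction k with
  | zero => intro i; simp [qc]
  | succ k ih =>
    intro i
    rw [qc_sum_succ q k (fun j => (q ^ i) ^ j)]
    have h2 : ∑ j ∈ range (k+1), qc q k j * (q ^ i) ^ (j+1)
        = q ^ i * ∑ j ∈ range (k+1), qc q k j * (q ^ i) ^ j := by
      rw [Finset.mul_sum]
      exact Finset.sum_congr rfl fun j _ => by ring
    rw [h2, ih i]
    rw [Finset.prod_range_succ]
    have h1q : (1:ℝ) - q ≠ 0 := sub_ne_zero.mpr (fun h => hq (by linarith))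
    have hzpow : q ^ ((i:ℤ) - (k:ℤ)) = q ^ i * q ^ (-(k:ℤ)) := by
      rw [sub_eq_add_neg, zpow_add₀ hq0, zpow_natCast]
    rw [hzpow]
    have hqk : q ^ (-(k:ℤ)) ≠ 0 := zpow_ne_zero _ hq0
    field_simp
    ring

lemma prod_lt_eq_zero (q : ℝ) (k i : ℕ) (h : i < k) :
    ∏ l ∈ range k, (1 - q ^ ((i:ℤ) - (l:ℤ))) = 0 := by
  apply Finset.prod_eq_zero (Finset.mem_range.mpr h)
  simp

lemma prod_diag_eq (q : ℝ) (k : ℕ) :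
    ∏ l ∈ range k, (1 - q ^ ((k:ℤ) - (l:ℤ))) = qPoch q q k := by
  rw [qPoch, ← Finset.prod_range_reflect]
  refine Finset.prod_congr rfl fun j hj => ?_
  have hj' : j < k := Finset.mem_range.mp hj
  congr 1
  have hcast : (k:ℤ) - ((k - 1 - j : ℕ):ℤ) = ((j:ℤ) + 1) := by
    have h1 : ((k - 1 - j : ℕ):ℤ) = (k:ℤ) - 1 - j := by omega
    rw [h1]; ring
  rw [hcast]
  rw [show ((j:ℤ) + 1) = ((j+1 : ℕ):ℤ) by push_cast; ring, zpow_natCast]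
  rw [pow_succ]
  ring

lemma prod_supdiag_eq (q : ℝ) (k : ℕ) :
    (1 - q) * ∏ l ∈ range k, (1 - q ^ ((((k:ℕ)+1):ℤ) - (l:ℤ))) = qPoch q q (k+1) := by
  rw [qPoch]
  rw [Finset.prod_range_succ' (fun j => (1 - q * q ^ j)) k]
  rw [show (1 - q * q ^ (0:ℕ)) = 1 - q by simp]
  rw [mul_comm]
  congr 1
  rw [← Finset.prod_range_reflect]
  refine Finset.prod_congr rfl fun j hj => ?_
  have hj' : j < k := Finset.mem_range.mp hj
  congr 1
  have hcast : ((k:ℤ)+1) - ((k - 1 - j : ℕ):ℤ) = ((j:ℤ) + 2) := by omega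
  rw [hcast]
  rw [show ((j:ℤ) + 2) = ((j+2 : ℕ):ℤ) by push_cast; ring, zpow_natCast]
  ring

/-- If `f^{(n)}(0)` exists, then `(D_q^n f)(0) = (f^{(n)}(0)/n!) ⬝ (q;q)_n/(1-q)^n`. -/
theorem qDeriv_iterate_apply_zero (q : ℝ) (hq : q ≠ 1) (n : ℕ) (hn : 0 < n)
    (f : ℝ → ℝ)
    (hf : ∀ k < n - 1, ∀ᶠ x in nhds (0 : ℝ), DifferentiableAt ℝ (iteratedDeriv k f) x)
    (hf' : DifferentiableAt ℝ (iteratedDeriv (n - 1) f) 0) :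
    ((qDeriv q)^[n] f) 0 =
      iteratedDeriv n f 0 / n.factorial * (qPoch q q n / (1 - q) ^ n) := by
  have h1q : (1:ℝ) - q ≠ 0 := sub_ne_zero.mpr (fun h => hq (by linarith))
  set a : ℕ → ℝ := fun i => iteratedDeriv i f 0 / i.factorial with ha
  have peano : ∀ m, 1 ≤ m → m ≤ n → Tendsto
      (fun x : ℝ => (f x - ∑ i ∈ range (m+1), a i * x ^ i) / x ^ m)
      (nhdsWithin (0:ℝ) {0}ᶜ) (nhds 0) := by
    intro m h1 h2
    apply peano_taylor m h1 f
    · intro k hk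
      exact hf k (by omega)
    · rcases Nat.lt_or_ge (m-1) (n-1) with h | h
      · exact (hf (m-1) h).self_of_nhds
      · have : m - 1 = n - 1 := by omega
        rw [this]; exact hf'
  by_cases hq0 : q = 0
  · -- case q = 0
    subst hq0
    have claim : ∀ k, k ≤ n →
        ((qDeriv 0)^[k] f) 0 = a k ∧
        ∀ x : ℝ, x ≠ 0 → ((qDeriv 0)^[k] f) x
          = (f x - ∑ i ∈ range k, a i * x ^ i) / x ^ k := by
      intro k
      induction k with
      | zero =>
        intro _
        constructor
        · simp [ha]
        · intro x hx; simp
      | succ k ih =>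
        intro hkn
        obtain ⟨ih0, ihx⟩ := ih (by omega)
        have hform : ∀ x : ℝ, x ≠ 0 → ((qDeriv 0)^[k+1] f) x
            = (f x - ∑ i ∈ range (k+1), a i * x ^ i) / x ^ (k+1) := by
          intro x hx
          rw [Function.iterate_succ_apply']
          rw [show qDeriv 0 ((qDeriv 0)^[k] f) x
              = (((qDeriv 0)^[k] f) x - ((qDeriv 0)^[k] f) (0 * x)) / ((1-0) * x) by
            simp [qDeriv, hx]]
          rw [zero_mul, ih0, ihx x hx, Finset.sum_range_succ]
          have hxk : x ^ k ≠ 0 := pow_ne_zero _ hx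
          field_simp
          ring
        have hval : ((qDeriv 0)^[k+1] f) 0 = a (k+1) := by
          rw [Function.iterate_succ_apply']
          rw [show qDeriv 0 ((qDeriv 0)^[k] f) 0 = deriv ((qDeriv 0)^[k] f) 0 by
            simp [qDeriv]]
          have hder : HasDerivAt ((qDeriv 0)^[k] f) (a (k+1)) 0 := by
            rw [hasDerivAt_iff_tendsto_slope]
            have hP := peano (k+1) (by omega) hkn
            have h2 : Tendsto (fun x : ℝ =>
                (f x - ∑ i ∈ range (k+2), a i * x ^ i) / x ^ (k+1) + a (k+1))
                (nhdsWithin (0:ℝ) {0}ᶜ) (nhds (0 + a (k+1))) := hP.add_const _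
            rw [zero_add] at h2
            refine h2.congr' ?_
            filter_upwards [self_mem_nhdsWithin] with x hx
            have hx0 : x ≠ 0 := hx
            have hxk : x ^ k ≠ 0 := pow_ne_zero _ hx0
            rw [slope_def_field, ihx x hx0, ih0]
            rw [Finset.sum_range_succ (fun i => a i * x ^ i) (k+1),
              Finset.sum_range_succ (fun i => a i * x ^ i) k]
            field_simp
            ring
          exact hder.deriv
        exact ⟨hval, hform⟩
    obtain ⟨h0, -⟩ := claim n le_rfl
    rw [h0]
    have hpoch : qPoch 0 0 n = 1 := by
      rw [qPoch]
      apply Finset.prod_eq_one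
      intro j _
      simp
    rw [hpoch]
    norm_num
    rfl
  · -- case q ≠ 0
    have claim : ∀ k, k ≤ n →
        ((qDeriv q)^[k] f) 0 = a k * (qPoch q q k / (1-q) ^ k) := by
      intro k
      induction k with
      | zero =>
        intro _
        simp [ha, qPoch]
      | succ k ih =>
        intro hkn
        have ih0 := ih (by omega)
        have hP := peano (k+1) (by omega) hkn
        set R : ℝ → ℝ := fun y => f y - ∑ i ∈ range (k+2), a i * y ^ i with hR
        set Pk1 : ℝ := ∏ l ∈ range k, (1 - q ^ ((((k+1):ℕ):ℤ) - (l:ℤ))) with hPk1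
        -- pointwise expansion of the coefficient sum
        have hsum : ∀ x : ℝ, ∑ j ∈ range (k+1), qc q k j * f (q ^ j * x)
            = (a k * (qPoch q q k / (1-q)^k)) * x ^ k
              + (a (k+1) * (Pk1 / (1-q)^k)) * x ^ (k+1)
              + ∑ j ∈ range (k+1), qc q k j * R (q ^ j * x) := by
          intro x
          have hfj : ∀ j : ℕ, qc q k j * f (q ^ j * x)
              = (∑ i ∈ range (k+2), a i * x ^ i * (qc q k j * (q ^ i) ^ j))
                + qc q k j * R (q ^ j * x) := by
            intro j
            have : f (q ^ j * x) = (∑ i ∈ range (k+2), a i * ((q ^ i) ^ j * x ^ i))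
                + R (q ^ j * x) := by
              rw [hR]
              simp only
              rw [show ∑ i ∈ range (k+2), a i * (q ^ j * x) ^ i
                  = ∑ i ∈ range (k+2), a i * ((q ^ i) ^ j * x ^ i) from
                Finset.sum_congr rfl fun i _ => by rw [mul_pow, ← pow_mul, ← pow_mul, Nat.mul_comm]]
              ring
            rw [this, mul_add]
            congr 1
            rw [Finset.mul_sum]
            exact Finset.sum_congr rfl fun i _ => by ring
          rw [Finset.sum_congr rfl fun j _ => hfj j, Finset.sum_add_distrib]
          congr 1
          rw [Finset.sum_comm]
          have hmono : ∀ i ∈ range (k+2),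
              ∑ j ∈ range (k+1), a i * x ^ i * (qc q k j * (q ^ i) ^ j)
              = a i * x ^ i
                  * ((∏ l ∈ range k, (1 - q ^ ((i:ℤ) - (l:ℤ)))) / (1-q)^k) := by
            intro i _
            rw [← Finset.mul_sum, qc_monomial q hq hq0 k i]
          rw [Finset.sum_congr rfl hmono]
          rw [Finset.sum_range_succ, Finset.sum_range_succ]
          rw [Finset.sum_eq_zero (fun i hi => by
            rw [prod_lt_eq_zero q k i (Finset.mem_range.mp hi)]
            simp)]
          rw [prod_diag_eq q k]
          rw [← hPk1]
          ring
        -- derivative at 0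
        rw [Function.iterate_succ_apply']
        rw [show qDeriv q ((qDeriv q)^[k] f) 0 = deriv ((qDeriv q)^[k] f) 0 by
          simp [qDeriv]]
        have hRlim : Tendsto (fun x : ℝ =>
            (∑ j ∈ range (k+1), qc q k j * R (q ^ j * x)) / x ^ (k+1))
            (nhdsWithin (0:ℝ) {0}ᶜ) (nhds 0) := by
          have hterm : ∀ j ∈ range (k+1), Tendsto (fun x : ℝ =>
              qc q k j * R (q ^ j * x) / x ^ (k+1))
              (nhdsWithin (0:ℝ) {0}ᶜ) (nhds 0) := by
            intro j _
            have hqj : (q:ℝ) ^ j ≠ 0 := pow_ne_zero _ hq0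
            have hmap : Tendsto (fun x : ℝ => q ^ j * x)
                (nhdsWithin (0:ℝ) {0}ᶜ) (nhdsWithin (0:ℝ) {0}ᶜ) := by
              rw [tendsto_nhdsWithin_iff]
              constructor
              · have : Tendsto (fun x : ℝ => q ^ j * x) (nhds 0) (nhds (q ^ j * 0)) :=
                  (continuous_const.mul continuous_id).tendsto 0
                rw [mul_zero] at this
                exact this.mono_left nhdsWithin_le_nhds
              · filter_upwards [self_mem_nhdsWithin] with x hx
                exact mul_ne_zero hqj hx
            have hcomp := hP.comp hmap
            have h3 : Tendsto (fun x : ℝ =>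
                (qc q k j * (q ^ j) ^ (k+1)) * ((fun y => R y / y ^ (k+1)) (q ^ j * x)))
                (nhdsWithin (0:ℝ) {0}ᶜ) (nhds ((qc q k j * (q ^ j) ^ (k+1)) * 0)) :=
              hcomp.const_mul _
            rw [mul_zero] at h3
            refine h3.congr' ?_
            filter_upwards [self_mem_nhdsWithin] with x hx
            have hx0 : x ≠ 0 := hx
            have hqjx : (q ^ j * x) ^ (k+1) ≠ 0 := pow_ne_zero _ (mul_ne_zero hqj hx0)
            rw [mul_pow]
            field_simp
          have := tendsto_finset_sum (range (k+1)) hterm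
          rw [Finset.sum_const_zero] at this
          refine this.congr ?_
          intro x
          rw [Finset.sum_div]
        have hder : HasDerivAt ((qDeriv q)^[k] f) (a (k+1) * (Pk1 / (1-q)^k)) 0 := by
          rw [hasDerivAt_iff_tendsto_slope]
          have h2 : Tendsto (fun x : ℝ =>
              a (k+1) * (Pk1 / (1-q)^k)
                + (∑ j ∈ range (k+1), qc q k j * R (q ^ j * x)) / x ^ (k+1))
              (nhdsWithin (0:ℝ) {0}ᶜ)
              (nhds (a (k+1) * (Pk1 / (1-q)^k) + 0)) :=
            hRlim.const_add _
          rw [add_zero] at h2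
          refine h2.congr' ?_
          filter_upwards [self_mem_nhdsWithin] with x hx
          have hx0 : x ≠ 0 := hx
          have hxk : x ^ k ≠ 0 := pow_ne_zero _ hx0
          rw [slope_def_field, qDeriv_iterate_formula q hq hq0 f k x hx0, ih0, hsum x]
          field_simp
          ring
        rw [hder.deriv]
        -- convert Pk1 to qPoch
        have hPoch := prod_supdiag_eq q k
        rw [show ((k:ℤ)+1) = (((k+1:ℕ)):ℤ) by push_cast; ring] at hPoch
        rw [← hPk1] at hPoch
        have hgoal : qPoch q q (k+1) / (1-q)^(k+1) = Pk1 / (1-q)^k := by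
          rw [← hPoch, pow_succ]
          field_simp
        rw [hgoal]
    exact claim n le_rfl
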